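/- Let p be prime, m ≥ 2, π a permutation of {1,…,m}, and define f(γ) = ∑_{e=1}^{m−1} γ_{π(e)}γ_{π(e+1)} (mod p) for γ ∈ (Z/p)^m. For r, x ∈ Z/p, set a^r_x(γ) = f(γ) + r·γ_{π(1)} + x·γ_{π(m)}. Then for fixed x ≠ x' in Z/p, and any r, r' ∈ Z/p, ∑_{γ ∈ (Z/p)^m} ω_p^{a^r_x(γ) − a^{r'}_{x'}(γ)} = 0. -/

import Mathlib

open Complex Finset

theorem stmt14 (p : ℕ) (hp : p.Prime) (m : ℕ) (hm : 2 ≤ m)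
    (π : Equiv.Perm (Fin m)) (r r' x x' : ZMod p) (hxx' : x ≠ x') :
    letI : NeZero p := ⟨hp.ne_zero⟩
    let ω : ℂ := Complex.exp (2 * Real.pi * Complex.I / p)
    let f : (Fin m → ZMod p) → ZMod p := fun γ =>
      ∑ e : Fin (m - 1),
        γ (π (Fin.castLE (Nat.sub_le m 1) e)) * γ (π ⟨e.val + 1, by omega⟩)
    let a : ZMod p → ZMod p → (Fin m → ZMod p) → ZMod p := fun t y γ =>
      f γ + t * γ (π ⟨0, by omega⟩) + y * γ (π ⟨m - 1, by omega⟩)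
    ∑ γ : Fin m → ZMod p, ω ^ ((a r x γ - a r' x' γ).val) = 0 := by
  intro ω f a
  haveI : NeZero p := ⟨hp.ne_zero⟩
  have hprim : IsPrimitiveRoot ω p := Complex.isPrimitiveRoot_exp p hp.ne_zero
  have hω : ω ^ p = 1 := hprim.pow_eq_one
  have hχ : ∀ u v : ZMod p, ω ^ (u + v).val = ω ^ u.val * ω ^ v.val := by
    intro u v
    rw [ZMod.val_add, ← pow_eq_pow_mod _ hω, pow_add]
  set j : Fin m := π ⟨m - 1, by omega⟩ with hj
  set c : ZMod p := x - x' with hc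
  have hc0 : c ≠ 0 := sub_ne_zero.mpr hxx'
  have hωc : ω ^ c.val ≠ 1 := by
    refine hprim.pow_ne_one_of_pos_of_lt ?_ (ZMod.val_lt c)
    exact (fun h => hc0 ((ZMod.val_eq_zero c).mp h))
  have key : ∀ γ : Fin m → ZMod p,
      a r x γ - a r' x' γ = (r - r') * γ (π ⟨0, by omega⟩) + c * γ j := by
    intro γ; simp only [a, hc, hj]; ring
  set S := ∑ γ : Fin m → ZMod p, ω ^ ((a r x γ - a r' x' γ).val) with hS
  have hshift : S = ω ^ c.val * S := by
    rw [hS, Finset.mul_sum]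
    have hji : j ≠ π ⟨0, by omega⟩ := by
      intro h
      have h2 := π.injective (hj ▸ h)
      simp only [Fin.mk.injEq] at h2
      omega
    refine Fintype.sum_equiv
      (Equiv.addRight (fun k => if k = j then (-1 : ZMod p) else 0)) _ _ ?_
    intro γ
    simp only [Equiv.coe_addRight, Pi.add_apply, key]
    rw [if_pos trivial, if_neg (Ne.symm hji), add_zero]
    have heq : (r - r') * γ (π ⟨0, by omega⟩) + c * γ j
        = ((r - r') * γ (π ⟨0, by omega⟩) + c * (γ j + -1)) + c := by ring
    rw [heq, hχ, mul_comm]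
  have h1 : (1 - ω ^ c.val) * S = 0 := by
    rw [sub_mul, one_mul, ← hshift, sub_self]
  rcases mul_eq_zero.mp h1 with h | h
  · exact absurd (sub_eq_zero.mp h).symm hωc
  · exact h
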